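/- Let q be an odd prime power, K a finite field with q² elements, F its subfield of order q, f : K → K a planar function, and δ ∈ K \ {0}. Define φ : K → F by φ(x) = δf(x) + (δf(x))^q, and assume that {x ∈ K : φ(x) = 0} has exactly one element and that for every β ∈ F \ {0} the set {x ∈ K : φ(x) = β} has exactly q+1 elements. Then for any two distinct u, v ∈ K there are exactly q elements a ∈ K with φ(u+a) = φ(v+a) ≠ 0; consequently any two distinct points of K lie on exactly q circles C_{a,β}, and the pair (K, {C_{a,β} : a ∈ K, β ∈ F \ {0}}) is a 2-(q², q+1, q) design. -/

import Mathlib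

set_option linter.unusedVariables false

open Polynomial in
lemma aux_roots13 {K : Type} [Field K] {q : ℕ} (hq : 2 ≤ q) (a b c : K) (ha : a ≠ 0) :
    {x : K | a * x ^ q + (b * x + c) = 0}.ncard ≤ q := by
  classical
  set P : K[X] := C a * X ^ q + (C b * X + C c) with hP
  have hPne : P ≠ 0 := by
    intro h
    have h2 : P.coeff q = 0 := by rw [h]; simp
    rw [hP] at h2
    simp [coeff_add, coeff_C_mul, coeff_X_pow, coeff_C, coeff_X] at h2
    rw [if_neg (show ¬(1 = q) by omega), if_neg (show ¬(q = 0) by omega)] at h2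
    simp at h2
    exact ha h2
  have hdeg : P.natDegree ≤ q := by
    apply Polynomial.natDegree_add_le_of_degree_le
    · exact (natDegree_C_mul_le _ _).trans (by simp)
    · refine (Polynomial.natDegree_add_le_of_degree_le ?_ ?_).trans (show 1 ≤ q by omega)
      · exact (natDegree_C_mul_le _ _).trans (by simp)
      · simp
  have hsub : {x : K | a * x ^ q + (b * x + c) = 0} ⊆ ↑P.roots.toFinset := by
    intro x hx
    simp only [Multiset.mem_toFinset, Finset.coe_sort_coe, Finset.mem_coe,
      mem_roots hPne, IsRoot, hP]
    exact (mem_roots hPne).mpr (by simpa [hP] using hx)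
  calc {x : K | a * x ^ q + (b * x + c) = 0}.ncard
      ≤ (↑P.roots.toFinset : Set K).ncard := Set.ncard_le_ncard hsub P.roots.toFinset.finite_toSet
    _ = P.roots.toFinset.card := Set.ncard_coe_finset _
    _ ≤ Multiset.card P.roots := Multiset.toFinset_card_le _
    _ ≤ P.natDegree := Polynomial.card_roots' P
    _ ≤ q := hdeg


/-- Corollary 3.8.  Let `f` be planar on `K = F_{q²}`, `δ ≠ 0`, and
`φ(x) = δf(x) + (δf(x))^q`.  Assume `φ⁻¹(0)` is a singleton and every
`β ∈ F \ {0}` has exactly `q+1` preimages under `φ`.  Then each circle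
`C_{a,β} = {x : φ(x+a) = β}` has `q+1` points, for any two distinct `u v ∈ K`
there are exactly `q` elements `a` with `φ(u+a) = φ(v+a) ≠ 0`, and any two
distinct points lie on exactly `q` circles: `(K, circles)` is a
`2-(q², q+1, q)` design. -/
theorem stmt13 (p m q : ℕ) (hp : Nat.Prime p) (hpodd : Odd p) (hm : 0 < m) (hq : q = p ^ m)
    (K : Type) [Field K] [Fintype K] (hcard : Fintype.card K = q ^ 2)
    (f : K → K)
    (hplanar : ∀ a : K, a ≠ 0 → Function.Bijective (fun x : K => f (x + a) - f x))
    (δ : K) (hδ : δ ≠ 0)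
    (φ : K → K) (hφ : ∀ x : K, φ x = δ * f x + (δ * f x) ^ q)
    (hzero : {x : K | φ x = 0}.ncard = 1)
    (hcount : ∀ β : K, β ^ q = β → β ≠ 0 → {x : K | φ x = β}.ncard = q + 1) :
    (∀ a β : K, β ^ q = β → β ≠ 0 → {x : K | φ (x + a) = β}.ncard = q + 1) ∧
    (∀ u v : K, u ≠ v →
      {a : K | φ (u + a) = φ (v + a) ∧ φ (u + a) ≠ 0}.ncard = q ∧
      {C : Set K | ∃ a β : K, β ^ q = β ∧ β ≠ 0 ∧ C = {x : K | φ (x + a) = β} ∧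
        u ∈ C ∧ v ∈ C}.ncard = q) := by
  classical
  have hq2 : 2 ≤ q := by
    have h1 : p ≤ p ^ m := Nat.le_self_pow hm.ne' p
    have := hp.two_le
    omega
  -- characteristic
  haveI hCharC : CharP K (ringChar K) := ringChar.charP K
  obtain ⟨n, hcprime, hcardc⟩ := FiniteField.card K (ringChar K)
  have hpc : p = ringChar K := by
    have hdvd : p ∣ (ringChar K) ^ (n : ℕ) := by
      rw [← hcardc, hcard, hq]
      exact dvd_pow (dvd_pow_self p hm.ne') two_ne_zero
    exact (Nat.prime_dvd_prime_iff_eq hp hcprime).mp (hp.dvd_of_dvd_pow hdvd)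
  haveI hCharP : CharP K p := hpc ▸ hCharC
  haveI hFact : Fact p.Prime := ⟨hp⟩
  have hfrob : ∀ x y : K, (x + y) ^ q = x ^ q + y ^ q := by
    intro x y; rw [hq]; exact add_pow_char_pow x y p m
  have hfrobs : ∀ x y : K, (x - y) ^ q = x ^ q - y ^ q := by
    intro x y; rw [hq]; exact sub_pow_char_pow x y m
  have hpowq : ∀ x : K, (x ^ q) ^ q = x := by
    intro x
    rw [← pow_mul, ← Nat.pow_two, ← hcard, FiniteField.pow_card]
  obtain ⟨L, hL⟩ : ∃ L : K → K, ∀ y, L y = δ * y + (δ * y) ^ q :=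
    ⟨_, fun y => rfl⟩
  have hφL : ∀ x, φ x = L (f x) := fun x => by rw [hφ x, hL]
  have hLsub : ∀ y z, L (y - z) = L y - L z := by
    intro y z; simp only [hL]; rw [mul_sub, hfrobs]; ring
  have hLadd : ∀ y z, L (y + z) = L y + L z := by
    intro y z; simp only [hL]; rw [mul_add, hfrob]; ring
  have hL0 : L 0 = 0 := by
    simp [hL, zero_pow (show q ≠ 0 by omega)]
  have hLF : ∀ y, (L y) ^ q = L y := by
    intro y; simp only [hL]; rw [hfrob, hpowq]; ring
  have hφF : ∀ x, (φ x) ^ q = φ x := fun x => by rw [hφL]; exact hLF _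
  -- fiber bound via polynomial roots
  have hLfib_le : ∀ t : K, {y : K | L y = t}.ncard ≤ q := by
    intro t
    have hset : {y : K | L y = t} = {y : K | δ ^ q * y ^ q + (δ * y + -t) = 0} := by
      ext y
      simp only [Set.mem_setOf_eq, hL, mul_pow]
      constructor <;> intro h <;> linear_combination h
    rw [hset]
    exact aux_roots13 hq2 _ _ _ (pow_ne_zero q hδ)
  have hF_le : {β : K | β ^ q = β}.ncard ≤ q := by
    have hset : {β : K | β ^ q = β} = {x : K | (1 : K) * x ^ q + ((-1) * x + 0) = 0} := by
      ext x
      simp only [Set.mem_setOf_eq]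
      constructor <;> intro h <;> linear_combination h
    rw [hset]
    exact aux_roots13 hq2 _ _ _ one_ne_zero
  -- preimage ncard under bijections
  have hpre : ∀ (g : K → K), Function.Bijective g → ∀ T : Set K, (g ⁻¹' T).ncard = T.ncard := by
    intro g hg T
    conv_rhs => rw [← Set.image_preimage_eq T hg.surjective]
    rw [Set.ncard_image_of_injective _ hg.injective]
  -- kernel size
  set Lhom : K →+ K := { toFun := L, map_zero' := hL0, map_add' := hLadd } with hLhom
  have hker_ge : q ≤ {y : K | L y = 0}.ncard := by
    have hiso : Nat.card K = Nat.card Lhom.range * Nat.card Lhom.ker := by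
      rw [AddSubgroup.card_eq_card_quotient_mul_card_addSubgroup Lhom.ker]
      congr 1
      exact Nat.card_congr (QuotientAddGroup.quotientKerEquivRange Lhom).toEquiv
    have hcardK : Nat.card K = q * q := by
      rw [Nat.card_eq_fintype_card, hcard, Nat.pow_two]
    have hrange_le : Nat.card Lhom.range ≤ q := by
      have h1 : Nat.card Lhom.range = (Set.range L).ncard := by
        rw [← Nat.card_coe_set_eq]
        exact Nat.card_congr (Equiv.setCongr (by ext x; simp [hLhom, AddMonoidHom.mem_range]))
      rw [h1]
      refine le_trans (Set.ncard_le_ncard ?_ (Set.toFinite _)) hF_le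
      rintro x ⟨y, rfl⟩
      exact hLF y
    have hker_eq : Nat.card Lhom.ker = {y : K | L y = 0}.ncard := by
      rw [← Nat.card_coe_set_eq]
      exact Nat.card_congr (Equiv.setCongr (by ext x; simp [hLhom, AddMonoidHom.mem_ker]))
    rw [hcardK, hker_eq] at hiso
    have h2 : q * q ≤ q * {y : K | L y = 0}.ncard := by
      calc q * q = Nat.card Lhom.range * {y : K | L y = 0}.ncard := hiso
        _ ≤ q * {y : K | L y = 0}.ncard := Nat.mul_le_mul_right _ hrange_le
    exact Nat.le_of_mul_le_mul_left h2 (by omega)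
  have hker : {y : K | L y = 0}.ncard = q := le_antisymm (hLfib_le 0) hker_ge
  -- nonempty fibers have size q
  have hLfib_eq : ∀ t x₀ : K, L x₀ = t → {y : K | L y = t}.ncard = q := by
    intro t x₀ h
    have hset : {y : K | L y = t} = (fun y => y - x₀) ⁻¹' {y : K | L y = 0} := by
      ext y
      simp only [Set.mem_preimage, Set.mem_setOf_eq, hLsub, h, sub_eq_zero]
    rw [hset, hpre (fun y => y - x₀) (Equiv.subRight x₀).bijective, hker]
  -- difference sets
  have hdiff_set : ∀ c t : K, {x : K | φ (x + c) - φ x = t}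
      = (fun x => f (x + c) - f x) ⁻¹' {y : K | L y = t} := by
    intro c t
    ext x
    simp only [Set.mem_preimage, Set.mem_setOf_eq, hφL, hLsub]
  have hdiff_le : ∀ c : K, c ≠ 0 → ∀ t : K, {x : K | φ (x + c) - φ x = t}.ncard ≤ q := by
    intro c hc t
    rw [hdiff_set, hpre _ (hplanar c hc)]
    exact hLfib_le t
  have hdiff_eq0 : ∀ c : K, c ≠ 0 → {x : K | φ (x + c) = φ x}.ncard = q := by
    intro c hc
    have hset : {x : K | φ (x + c) = φ x} = {x : K | φ (x + c) - φ x = 0} := by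
      ext x; simp [sub_eq_zero]
    rw [hset, hdiff_set, hpre _ (hplanar c hc), hLfib_eq 0 0 hL0]
  constructor
  · -- Part 1: circle sizes
    intro a β hβF hβ0
    have hset : {x : K | φ (x + a) = β} = (fun x => x + a) ⁻¹' {x : K | φ x = β} := rfl
    rw [hset, hpre (fun x => x + a) (Equiv.addRight a).bijective, hcount β hβF hβ0]
  · intro u v huv
    have hc : u - v ≠ 0 := sub_ne_zero.mpr huv
    -- Part 2
    have hAeq : {a : K | φ (u + a) = φ (v + a) ∧ φ (u + a) ≠ 0}
        = (fun a => v + a) ⁻¹' {x : K | φ (x + (u - v)) = φ x} := by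
      ext a
      have h1 : v + a + (u - v) = u + a := by ring
      simp only [Set.mem_setOf_eq, Set.mem_preimage, h1]
      constructor
      · rintro ⟨h, _⟩; exact h
      · intro h
        refine ⟨h, fun h0 => huv ?_⟩
        obtain ⟨x₀, hx₀⟩ := Set.ncard_eq_one.mp hzero
        have hu : u + a ∈ {x : K | φ x = 0} := h0
        have hv : v + a ∈ {x : K | φ x = 0} := by
          rw [Set.mem_setOf_eq, ← h]; exact h0
        rw [hx₀, Set.mem_singleton_iff] at hu hv
        have : u + a = v + a := by rw [hu, hv]
        exact add_right_cancel this
    have hA : {a : K | φ (u + a) = φ (v + a) ∧ φ (u + a) ≠ 0}.ncard = q := by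
      rw [hAeq, hpre (fun a => v + a) (Equiv.addLeft v).bijective, hdiff_eq0 _ hc]
    refine ⟨hA, ?_⟩
    -- Part 3
    have hCeq : {C : Set K | ∃ a β : K, β ^ q = β ∧ β ≠ 0 ∧ C = {x : K | φ (x + a) = β} ∧
          u ∈ C ∧ v ∈ C}
        = (fun a => {x : K | φ (x + a) = φ (u + a)}) ''
            {a : K | φ (u + a) = φ (v + a) ∧ φ (u + a) ≠ 0} := by
      ext C
      constructor
      · rintro ⟨a, β, hβF, hβ0, rfl, hu, hv⟩
        have hu' : φ (u + a) = β := hu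
        have hv' : φ (v + a) = β := hv
        refine ⟨a, ⟨by rw [hu', hv'], by rw [hu']; exact hβ0⟩, ?_⟩
        show {x : K | φ (x + a) = φ (u + a)} = {x : K | φ (x + a) = β}
        rw [hu']
      · rintro ⟨a, ⟨h1, h2⟩, rfl⟩
        exact ⟨a, φ (u + a), hφF _, h2, rfl, rfl, h1.symm⟩
    have hinj : Set.InjOn (fun a => {x : K | φ (x + a) = φ (u + a)})
        {a : K | φ (u + a) = φ (v + a) ∧ φ (u + a) ≠ 0} := by
      intro a ha a' ha' hEq
      by_contra hne
      have hc0 : a' - a ≠ 0 := sub_ne_zero.mpr (Ne.symm hne)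
      have hsub2 : {y : K | φ y = φ (u + a)}
          ⊆ {y : K | φ (y + (a' - a)) - φ y = φ (u + a') - φ (u + a)} := by
        intro y hy
        have hy' : φ y = φ (u + a) := hy
        have hmem : (y - a) ∈ {x : K | φ (x + a) = φ (u + a)} := by
          show φ (y - a + a) = φ (u + a)
          rw [show y - a + a = y by ring, hy']
        have hEq' : {x : K | φ (x + a) = φ (u + a)} = {x : K | φ (x + a') = φ (u + a')} := hEq
        rw [hEq'] at hmem
        have hmem' : φ (y - a + a') = φ (u + a') := hmem
        rw [show y - a + a' = y + (a' - a) by ring] at hmem'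
        show φ (y + (a' - a)) - φ y = φ (u + a') - φ (u + a)
        rw [hmem', hy']
      have hbig : q + 1 ≤ q := by
        calc q + 1 = {y : K | φ y = φ (u + a)}.ncard :=
              (hcount _ (hφF _) ha.2).symm
          _ ≤ {y : K | φ (y + (a' - a)) - φ y = φ (u + a') - φ (u + a)}.ncard :=
              Set.ncard_le_ncard hsub2 (Set.toFinite _)
          _ ≤ q := hdiff_le _ hc0 _
      omega
    rw [hCeq, Set.ncard_image_of_injOn hinj, hA]
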